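/- In the complex Clifford algebra Cl₂, set f₁₁ = (1 + i·e₁e₂)/2, f₂₂ = (1 − i·e₁e₂)/2, f₁₂ = f₁₁·e₁, f₂₁ = e₁·f₁₁. Then: (i) f₁₁ and f₂₂ lie in the even part of Cl₂ and f₁₂ and f₂₁ lie in the odd part; (ii) f₁₁ + f₂₂ = 1 and f_{ij}·f_{kl} = f_{il} if j = k and = 0 if j ≠ k, for all i, j, k, l ∈ {1, 2}; (iii) the unique ℂ-algebra homomorphism M₂(ℂ) → Cl₂ sending the matrix unit E_{ij} to f_{ij} is an algebra isomorphism; and (iv) under this isomorphism, the automorphism of M₂(ℂ) given by conjugation by diag(1, −1) (equivalently, negation of the off-diagonal entries) corresponds to the grading automorphism involute of Cl₂. -/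

import Mathlib

open CliffordAlgebra

noncomputable section

/-- The quadratic form `x₁² + ⋯ + x_n²` on `ℂⁿ`. -/
def Qc (n : ℕ) : QuadraticForm ℂ (Fin n → ℂ) :=
  QuadraticMap.weightedSumSquares ℂ fun _ : Fin n => (1 : ℂ)

/-- The complex Clifford algebra `Cl n`. -/
abbrev Cl (n : ℕ) : Type := CliffordAlgebra (Qc n)

/-- The standard generators `e n i` of `Cl n`. -/
def e (n : ℕ) (i : Fin n) : Cl n := CliffordAlgebra.ι (Qc n) (Pi.single i 1)

/-- `f₁₁ = (1 + i·e₁e₂)/2` in `Cl 2`. -/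
def f11 : Cl 2 := (2 : ℂ)⁻¹ • (1 + Complex.I • (e 2 0 * e 2 1))

/-- `f₂₂ = (1 − i·e₁e₂)/2` in `Cl 2`. -/
def f22 : Cl 2 := (2 : ℂ)⁻¹ • (1 - Complex.I • (e 2 0 * e 2 1))

/-- The matrix-unit elements `f_{ij}` of `Cl 2`: `f₁₂ = f₁₁·e₁` and `f₂₁ = e₁·f₁₁`. -/
def f : Fin 2 → Fin 2 → Cl 2 := fun i j =>
  if i = 0 then (if j = 0 then f11 else f11 * e 2 0)
  else (if j = 0 then e 2 0 * f11 else f22)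

set_option linter.unreachableTactic false
set_option linter.unusedTactic false
set_option linter.unnecessarySeqFocus false

lemma Qc_single (n : ℕ) (i : Fin n) : Qc n (Pi.single i 1) = 1 := by
  simp [Qc, QuadraticMap.weightedSumSquares_apply, Pi.single_apply, Finset.sum_ite_eq]

lemma e_mul_self (n : ℕ) (i : Fin n) : e n i * e n i = 1 := by
  rw [e, ι_sq_scalar, Qc_single, map_one]

lemma e_anti : e 2 1 * e 2 0 = -(e 2 0 * e 2 1) := by
  have h : (Qc 2).IsOrtho (Pi.single 0 1) (Pi.single 1 1) := by
    simp [QuadraticMap.IsOrtho, Qc, QuadraticMap.weightedSumSquares_apply, Pi.single_apply,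
      Finset.sum_ite_eq, Fin.sum_univ_two]
  have := CliffordAlgebra.ι_mul_ι_add_swap_of_isOrtho h
  rw [show CliffordAlgebra.ι (Qc 2) (Pi.single 0 1) = e 2 0 from rfl,
    show CliffordAlgebra.ι (Qc 2) (Pi.single 1 1) = e 2 1 from rfl] at this
  exact eq_neg_of_add_eq_zero_left (by rw [add_comm]; exact this)


local notation "a" => e 2 0
local notation "b" => e 2 1

lemma au (x : Cl 2) : a * (a * x) = x := by rw [← mul_assoc, e_mul_self, one_mul]
lemma bu (x : Cl 2) : b * (b * x) = x := by rw [← mul_assoc, e_mul_self, one_mul]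

lemma uu : (a * b) * (a * b) = -1 := by
  rw [mul_assoc, ← mul_assoc b a, e_anti, neg_mul, mul_neg, mul_assoc a b b, e_mul_self,
    mul_one, e_mul_self]

lemma ua : (a * b) * a = -b := by
  rw [mul_assoc, e_anti, mul_neg, au]

lemma ub : (a * b) * b = a := by
  rw [mul_assoc, e_mul_self, mul_one]

lemma f11_mul_f11 : f11 * f11 = f11 := by
  simp only [f11, smul_mul_assoc, mul_smul_comm, add_mul, mul_add, one_mul, mul_one, uu,
    smul_smul, Complex.I_mul_I, smul_add, smul_neg]
  match_scalars <;> first | ring1 | linear_combination ((1:ℂ)/4) * Complex.I_mul_I | linear_combination (-(1:ℂ)/4) * Complex.I_mul_I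

lemma f22_mul_f22 : f22 * f22 = f22 := by
  simp only [f22, smul_mul_assoc, mul_smul_comm, sub_mul, mul_sub, one_mul, mul_one, uu,
    smul_smul, Complex.I_mul_I, smul_sub, smul_neg]
  match_scalars <;> first | ring1 | linear_combination ((1:ℂ)/4) * Complex.I_mul_I | linear_combination (-(1:ℂ)/4) * Complex.I_mul_I

lemma f11_mul_f22 : f11 * f22 = 0 := by
  simp only [f11, f22, smul_mul_assoc, mul_smul_comm, add_mul, mul_add, sub_mul, mul_sub,
    one_mul, mul_one, uu, smul_smul, Complex.I_mul_I, smul_add, smul_sub, smul_neg]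
  match_scalars <;> first | ring1 | linear_combination ((1:ℂ)/4) * Complex.I_mul_I | linear_combination (-(1:ℂ)/4) * Complex.I_mul_I

lemma f22_mul_f11 : f22 * f11 = 0 := by
  simp only [f11, f22, smul_mul_assoc, mul_smul_comm, add_mul, mul_add, sub_mul, mul_sub,
    one_mul, mul_one, uu, smul_smul, Complex.I_mul_I, smul_add, smul_sub, smul_neg]
  match_scalars <;> first | ring1 | linear_combination ((1:ℂ)/4) * Complex.I_mul_I | linear_combination (-(1:ℂ)/4) * Complex.I_mul_I

lemma a_mul_f11 : a * f11 = f22 * a := by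
  simp only [f11, f22, smul_mul_assoc, mul_smul_comm, add_mul, mul_add, sub_mul, mul_sub,
    one_mul, mul_one, ua, au, smul_neg]
  match_scalars <;> first | ring1 | linear_combination ((1:ℂ)/4) * Complex.I_mul_I | linear_combination (-(1:ℂ)/4) * Complex.I_mul_I

lemma f11_mul_a : f11 * a = a * f22 := by
  simp only [f11, f22, smul_mul_assoc, mul_smul_comm, add_mul, mul_add, sub_mul, mul_sub,
    one_mul, mul_one, ua, au, smul_neg]
  match_scalars <;> first | ring1 | linear_combination ((1:ℂ)/4) * Complex.I_mul_I | linear_combination (-(1:ℂ)/4) * Complex.I_mul_I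

lemma f11_add_f22 : f11 + f22 = 1 := by
  simp only [f11, f22]
  match_scalars <;> first | ring1 | linear_combination ((1:ℂ)/4) * Complex.I_mul_I | linear_combination (-(1:ℂ)/4) * Complex.I_mul_I

lemma a_mul_f22 : a * f22 = f11 * a := (f11_mul_a).symm
lemma f22_mul_a : f22 * a = a * f11 := (a_mul_f11).symm

lemma f11_mul_f11' (x : Cl 2) : f11 * (f11 * x) = f11 * x := by
  rw [← mul_assoc, f11_mul_f11]
lemma f22_mul_f22' (x : Cl 2) : f22 * (f22 * x) = f22 * x := by
  rw [← mul_assoc, f22_mul_f22]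
lemma f11_mul_f22' (x : Cl 2) : f11 * (f22 * x) = 0 := by
  rw [← mul_assoc, f11_mul_f22, zero_mul]
lemma f22_mul_f11' (x : Cl 2) : f22 * (f11 * x) = 0 := by
  rw [← mul_assoc, f22_mul_f11, zero_mul]
lemma a_mul_f11' (x : Cl 2) : a * (f11 * x) = f22 * (a * x) := by
  rw [← mul_assoc, a_mul_f11, mul_assoc]
lemma a_mul_f22' (x : Cl 2) : a * (f22 * x) = f11 * (a * x) := by
  rw [← mul_assoc, a_mul_f22, mul_assoc]

lemma f_mul (i j k l : Fin 2) : f i j * f k l = if j = k then f i l else 0 := by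
  fin_cases i <;> fin_cases j <;> fin_cases k <;> fin_cases l <;>
    simp only [f, Fin.isValue, if_true, if_false, one_ne_zero, Fin.zero_eta, Fin.mk_one,
      ite_true, ite_false, reduceIte] <;>
    simp [mul_assoc, f11_mul_f11, f22_mul_f22, f11_mul_f22, f22_mul_f11, f11_mul_f11',
      f22_mul_f22', f11_mul_f22', f22_mul_f11', a_mul_f11, a_mul_f22, a_mul_f11', a_mul_f22',
      au, e_mul_self]

lemma ab_mem_zero : (a * b : Cl 2) ∈ evenOdd (Qc 2) 0 :=
  CliffordAlgebra.ι_mul_ι_mem_evenOdd_zero (Qc 2) _ _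

lemma f11_mem : f11 ∈ evenOdd (Qc 2) 0 := by
  refine Submodule.smul_mem _ _ (Submodule.add_mem _ ?_ (Submodule.smul_mem _ _ ab_mem_zero))
  exact SetLike.one_mem_graded _

lemma f22_mem : f22 ∈ evenOdd (Qc 2) 0 := by
  refine Submodule.smul_mem _ _ (Submodule.sub_mem _ ?_ (Submodule.smul_mem _ _ ab_mem_zero))
  exact SetLike.one_mem_graded _

lemma a_mem : (a : Cl 2) ∈ evenOdd (Qc 2) 1 := CliffordAlgebra.ι_mem_evenOdd_one (Qc 2) _

lemma f01_mem : f11 * a ∈ evenOdd (Qc 2) 1 := by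
  have := SetLike.mul_mem_graded f11_mem a_mem
  rwa [zero_add] at this

lemma f10_mem : a * f11 ∈ evenOdd (Qc 2) 1 := by
  have := SetLike.mul_mem_graded a_mem f11_mem
  rwa [add_zero] at this

/-- The candidate linear map `M₂(ℂ) →ₗ Cl 2`. -/
def cl2L : Matrix (Fin 2) (Fin 2) ℂ →ₗ[ℂ] Cl 2 where
  toFun m := ∑ i : Fin 2, ∑ j : Fin 2, m i j • f i j
  map_add' x y := by simp [add_smul, Finset.sum_add_distrib]
  map_smul' c x := by simp [smul_smul, Finset.smul_sum]

lemma cl2L_apply (m : Matrix (Fin 2) (Fin 2) ℂ) :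
    cl2L m = m 0 0 • f 0 0 + m 0 1 • f 0 1 + m 1 0 • f 1 0 + m 1 1 • f 1 1 := by
  simp [cl2L, Fin.sum_univ_two]; abel

lemma cl2L_one : cl2L 1 = 1 := by
  rw [cl2L_apply]
  simp only [Matrix.one_apply_eq, Matrix.one_apply_ne (by decide : (0 : Fin 2) ≠ 1),
    Matrix.one_apply_ne (by decide : (1 : Fin 2) ≠ 0), one_smul, zero_smul, add_zero, zero_add]
  show f11 + f22 = 1
  exact f11_add_f22

lemma cl2L_mul (x y : Matrix (Fin 2) (Fin 2) ℂ) : cl2L (x * y) = cl2L x * cl2L y := by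
  rw [cl2L_apply, cl2L_apply, cl2L_apply]
  simp only [Matrix.mul_apply, Fin.sum_univ_two, add_mul, mul_add, smul_mul_assoc,
    mul_smul_comm, smul_smul, f_mul]
  norm_num
  module

def φ0 : Matrix (Fin 2) (Fin 2) ℂ →ₐ[ℂ] Cl 2 := AlgHom.ofLinearMap cl2L cl2L_one cl2L_mul

lemma φ0_apply (m : Matrix (Fin 2) (Fin 2) ℂ) :
    φ0 m = m 0 0 • f 0 0 + m 0 1 • f 0 1 + m 1 0 • f 1 0 + m 1 1 • f 1 1 := cl2L_apply m

lemma φ0_std (i j : Fin 2) : φ0 (Matrix.single i j 1) = f i j := by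
  rw [φ0_apply]
  fin_cases i <;> fin_cases j <;>
    simp [Matrix.single]

lemma psi_apply (ψ : Matrix (Fin 2) (Fin 2) ℂ →ₐ[ℂ] Cl 2)
    (h : ∀ i j : Fin 2, ψ (Matrix.single i j 1) = f i j) (m : Matrix (Fin 2) (Fin 2) ℂ) :
    ψ m = m 0 0 • f 0 0 + m 0 1 • f 0 1 + m 1 0 • f 1 0 + m 1 1 • f 1 1 := by
  conv_lhs => rw [Matrix.matrix_eq_sum_single m]
  rw [map_sum]
  simp only [map_sum, Fin.sum_univ_two, map_add]
  have key : ∀ i j : Fin 2, ψ (Matrix.single i j (m i j)) = m i j • f i j := by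
    intro i j
    rw [show Matrix.single i j (m i j) = m i j • Matrix.single i j 1 by
      rw [Matrix.smul_single, smul_eq_mul, mul_one], map_smul, h]
  rw [key, key, key, key]
  abel

lemma psi_eq (ψ : Matrix (Fin 2) (Fin 2) ℂ →ₐ[ℂ] Cl 2)
    (h : ∀ i j : Fin 2, ψ (Matrix.single i j 1) = f i j) : ψ = φ0 :=
  AlgHom.ext fun m => by rw [psi_apply ψ h m, φ0_apply]

lemma f01_add_f10 : f 0 1 + f 1 0 = a := by
  show f11 * a + a * f11 = a
  simp only [f11, smul_mul_assoc, mul_smul_comm, add_mul, mul_add, one_mul, mul_one, ua, au,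
    e_mul_self, smul_neg]
  module

lemma f10_sub_f01 : (-Complex.I) • (f 1 0 - f 0 1) = b := by
  show (-Complex.I) • (a * f11 - f11 * a) = b
  simp only [f11, smul_mul_assoc, mul_smul_comm, add_mul, mul_add, one_mul, mul_one, ua, au,
    e_mul_self, smul_neg]
  match_scalars <;> first | ring1 | linear_combination ((1:ℂ)) * Complex.I_mul_I |
    linear_combination (-(1:ℂ)) * Complex.I_mul_I

lemma iota_decomp (v : Fin 2 → ℂ) :
    CliffordAlgebra.ι (Qc 2) v = v 0 • a + v 1 • b := by
  have hv : v = v 0 • (Pi.single 0 1 : Fin 2 → ℂ) + v 1 • (Pi.single 1 1 : Fin 2 → ℂ) := by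
    funext x
    fin_cases x <;> simp [Pi.single_apply]
  rw [show (a : Cl 2) = CliffordAlgebra.ι (Qc 2) (Pi.single 0 1) from rfl,
    show (b : Cl 2) = CliffordAlgebra.ι (Qc 2) (Pi.single 1 1) from rfl]
  conv_lhs => rw [hv]
  rw [map_add, map_smul, map_smul]

lemma psi_surj (ψ : Matrix (Fin 2) (Fin 2) ℂ →ₐ[ℂ] Cl 2)
    (h : ∀ i j : Fin 2, ψ (Matrix.single i j 1) = f i j) : Function.Surjective ψ := by
  have hf : ∀ i j : Fin 2, f i j ∈ ψ.range := fun i j => ⟨_, h i j⟩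
  have ha : (a : Cl 2) ∈ ψ.range := by
    rw [← f01_add_f10]; exact add_mem (hf 0 1) (hf 1 0)
  have hb : (b : Cl 2) ∈ ψ.range := by
    rw [← f10_sub_f01]
    exact Subalgebra.smul_mem _ (sub_mem (hf 1 0) (hf 0 1)) _
  intro x
  suffices hx : x ∈ ψ.range by exact hx
  induction x using CliffordAlgebra.induction with
  | algebraMap r => exact Subalgebra.algebraMap_mem _ r
  | ι v =>
    rw [iota_decomp v]
    exact add_mem (Subalgebra.smul_mem _ ha _) (Subalgebra.smul_mem _ hb _)
  | mul x y hx hy => exact mul_mem hx hy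
  | add x y hx hy => exact add_mem hx hy

lemma psi_inj (ψ : Matrix (Fin 2) (Fin 2) ℂ →ₐ[ℂ] Cl 2) : Function.Injective ψ :=
  ψ.toRingHom.injective

lemma involute_e (n : ℕ) (i : Fin n) : involute (e n i) = -(e n i) := by
  simp [e, involute_ι]

lemma involute_f11 : involute f11 = f11 := by
  simp [f11, involute_e, neg_mul_neg]

lemma involute_f22 : involute f22 = f22 := by
  simp [f22, involute_e, neg_mul_neg]

lemma involute_f : ∀ i j : Fin 2, involute (f i j) = if i = j then f i j else -(f i j) := by
  intro i j
  fin_cases i <;> fin_cases j <;>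
    simp [f, involute_f11, involute_f22, involute_e, mul_neg, neg_mul]

lemma psi_involute (ψ : Matrix (Fin 2) (Fin 2) ℂ →ₐ[ℂ] Cl 2)
    (h : ∀ i j : Fin 2, ψ (Matrix.single i j 1) = f i j) (m : Matrix (Fin 2) (Fin 2) ℂ) :
    CliffordAlgebra.involute (ψ m) =
      ψ (Matrix.of fun i j => if i = j then m i j else -(m i j)) := by
  rw [psi_apply ψ h m, psi_apply ψ h (Matrix.of fun i j => if i = j then m i j else -(m i j))]
  simp only [map_add, map_smul, involute_f, Matrix.of_apply]
  norm_num

lemma f00_eq : f 0 0 = f11 := by simp [f]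
lemma f11'_eq : f 1 1 = f22 := by simp [f]
lemma f01_eq : f 0 1 = f11 * a := by simp [f]
lemma f10_eq : f 1 0 = a * f11 := by simp [f]

/-- The elements `f_{ij}` of `Cl 2` are a homogeneous system of matrix units summing to `1`;
the induced algebra map `M₂(ℂ) → Cl₂`, `E_{ij} ↦ f_{ij}`, is the unique such map, it is an
isomorphism, and under it conjugation by `diag(1, −1)` (negation of the off-diagonal entries)
corresponds to the grading automorphism `involute` of `Cl₂`. -/
theorem cl2_matrix_units :
    f 0 0 ∈ evenOdd (Qc 2) 0 ∧ f 1 1 ∈ evenOdd (Qc 2) 0 ∧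
    f 0 1 ∈ evenOdd (Qc 2) 1 ∧ f 1 0 ∈ evenOdd (Qc 2) 1 ∧
    f 0 0 + f 1 1 = 1 ∧
    (∀ i j k l : Fin 2, f i j * f k l = if j = k then f i l else 0) ∧
    (∃! φ : Matrix (Fin 2) (Fin 2) ℂ →ₐ[ℂ] Cl 2,
      ∀ i j : Fin 2, φ (Matrix.single i j 1) = f i j) ∧
    (∀ φ : Matrix (Fin 2) (Fin 2) ℂ →ₐ[ℂ] Cl 2,
      (∀ i j : Fin 2, φ (Matrix.single i j 1) = f i j) →
        Function.Bijective φ ∧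
        ∀ m : Matrix (Fin 2) (Fin 2) ℂ,
          CliffordAlgebra.involute (φ m) =
            φ (Matrix.of fun i j => if i = j then m i j else -(m i j))) := by
  refine ⟨?_, ?_, ?_, ?_, ?_, f_mul, ⟨φ0, φ0_std, fun ψ h => psi_eq ψ h⟩,
    fun ψ h => ⟨⟨psi_inj ψ, psi_surj ψ h⟩, psi_involute ψ h⟩⟩
  · rw [f00_eq]; exact f11_mem
  · rw [f11'_eq]; exact f22_mem
  · rw [f01_eq]; exact f01_mem
  · rw [f10_eq]; exact f10_mem
  · rw [f00_eq, f11'_eq]; exact f11_add_f22
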